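/- For all i, j ∈ {1,…,n} with i ≥ j, substituting t = 0 into the polynomial f_{i,j} ∈ ℚ[x_1,…,x_n,t] yields f_{i,j}(x_1,…,x_n,0) = Σ_{k=1}^{j} ( x_k · Π_{ℓ=j+1}^{i} (x_k − x_ℓ) ) in ℚ[x_1,…,x_n], where the empty product Π_{ℓ=j+1}^{j} is 1. -/

import Mathlib

/-- The variable `x_k` (for `1 ≤ k ≤ n`) in `ℚ[x_1,…,x_n,t]`, realized as
`MvPolynomial (Fin (n+1)) ℚ` where the variable of index `0` is `t`. -/
noncomputable def xv (n k : ℕ) : MvPolynomial (Fin (n + 1)) ℚ :=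
  if h : k ≤ n then MvPolynomial.X ⟨k, Nat.lt_succ_of_le h⟩ else 0

/-- The variable `t` in `ℚ[x_1,…,x_n,t]`. -/
noncomputable def tv (n : ℕ) : MvPolynomial (Fin (n + 1)) ℚ :=
  MvPolynomial.X 0

/-- `p_i := Σ_{k=1}^{i} (x_k − k·t)`, with `p_0 = 0`. -/
noncomputable def pp (n i : ℕ) : MvPolynomial (Fin (n + 1)) ℚ :=
  ∑ k ∈ Finset.Icc 1 i, (xv n k - (k : MvPolynomial (Fin (n + 1)) ℚ) * tv n)

/-- The polynomials `f_{i,j}`: `f_{j,j} = p_j`, `f_{i,0} = 0`, and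
`f_{i,j} = f_{i−1,j−1} + (x_j − x_i − t)·f_{i−1,j}` for `i > j ≥ 1`. -/
noncomputable def ff (n : ℕ) : ℕ → ℕ → MvPolynomial (Fin (n + 1)) ℚ
  | _, 0 => 0
  | 0, _ + 1 => 0
  | i + 1, j + 1 =>
    if i + 1 = j + 1 then pp n (j + 1)
    else ff n i j + (xv n (j + 1) - xv n (i + 1) - tv n) * ff n i (j + 1)

/-- The variable `x_k` (for `1 ≤ k ≤ n`) in `ℚ[x_1,…,x_n]`, realized as
`MvPolynomial (Fin n) ℚ` (with the variable of index `k-1` being `x_k`). -/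
noncomputable def xo (n k : ℕ) : MvPolynomial (Fin n) ℚ :=
  if h : 1 ≤ k ∧ k ≤ n then MvPolynomial.X ⟨k - 1, by omega⟩ else 0

/-- `ǰ_{i,j} := Σ_{k=1}^{j} ( x_k · Π_{ℓ=j+1}^{i} (x_k − x_ℓ) ) ∈ ℚ[x_1,…,x_n]`,
with the empty product equal to `1`. -/
noncomputable def fcheck (n i j : ℕ) : MvPolynomial (Fin n) ℚ :=
  ∑ k ∈ Finset.Icc 1 j, xo n k * ∏ l ∈ Finset.Icc (j + 1) i, (xo n k - xo n l)

/-- The `ℚ`-algebra homomorphism `ℚ[x_1,…,x_n,t] → ℚ[x_1,…,x_n]` substituting `t = 0`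
(and `x_k ↦ x_k`). -/
noncomputable def subT (n : ℕ) : MvPolynomial (Fin (n + 1)) ℚ →ₐ[ℚ] MvPolynomial (Fin n) ℚ :=
  MvPolynomial.aeval fun v : Fin (n + 1) => xo n (v : ℕ)

/-- For `i ≥ j ≥ 1` (and `i ≤ n`), substituting `t = 0` into `f_{i,j}` yields
`f_{i,j}(x_1,…,x_n,0) = Σ_{k=1}^{j} ( x_k · Π_{ℓ=j+1}^{i} (x_k − x_ℓ) )`. -/

lemma subT_xv (n k : ℕ) : subT n (xv n k) = xo n k := by
  unfold xv
  split_ifs with h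
  · simp [subT]
  · rw [map_zero]; unfold xo; rw [dif_neg (by omega)]

lemma subT_tv (n : ℕ) : subT n (tv n) = 0 := by
  simp [subT, tv, xo]

lemma subT_pp (n i : ℕ) : subT n (pp n i) = ∑ k ∈ Finset.Icc 1 i, xo n k := by
  unfold pp
  rw [map_sum]
  refine Finset.sum_congr rfl fun k _ => ?_
  rw [map_sub, map_mul, subT_xv, subT_tv]
  ring

lemma fcheck_zero (n i : ℕ) : fcheck n i 0 = 0 := by
  simp [fcheck]

lemma fcheck_rec (n m j : ℕ) (hjm : j + 1 ≤ m) :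
    fcheck n (m + 1) (j + 1)
      = fcheck n m j + (xo n (j + 1) - xo n (m + 1)) * fcheck n m (j + 1) := by
  set P : ℕ → MvPolynomial (Fin n) ℚ :=
    fun k => ∏ l ∈ Finset.Icc (j + 1 + 1) m, (xo n k - xo n l) with hP
  have hprod1 : ∀ k, (∏ l ∈ Finset.Icc (j + 1 + 1) (m + 1), (xo n k - xo n l))
      = P k * (xo n k - xo n (m + 1)) :=
    fun k => Finset.prod_Icc_succ_top (by omega) _
  have hprod2 : ∀ k, (∏ l ∈ Finset.Icc (j + 1) m, (xo n k - xo n l))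
      = (xo n k - xo n (j + 1)) * P k := by
    intro k
    rw [← Finset.Ioc_insert_left hjm, Finset.prod_insert (by simp)]
    congr 1
    rw [hP]
    congr 1
    exact (Finset.Icc_add_one_left_eq_Ioc _ _).symm
  have e1 : fcheck n (m + 1) (j + 1)
      = ∑ k ∈ Finset.Icc 1 j, xo n k * (P k * (xo n k - xo n (m + 1)))
        + xo n (j + 1) * (P (j + 1) * (xo n (j + 1) - xo n (m + 1))) := by
    rw [fcheck, Finset.sum_Icc_succ_top (show 1 ≤ j + 1 by omega)]
    refine congrArg₂ (· + ·) ?_ ?_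
    · exact Finset.sum_congr rfl fun k _ => by rw [hprod1 k]
    · rw [hprod1]
  have e2 : fcheck n m j
      = ∑ k ∈ Finset.Icc 1 j, xo n k * ((xo n k - xo n (j + 1)) * P k) := by
    rw [fcheck]
    exact Finset.sum_congr rfl fun k _ => by rw [hprod2 k]
  have e3 : fcheck n m (j + 1)
      = ∑ k ∈ Finset.Icc 1 j, xo n k * P k + xo n (j + 1) * P (j + 1) := by
    rw [fcheck, Finset.sum_Icc_succ_top (show 1 ≤ j + 1 by omega)]
  rw [e1, e2, e3, mul_add, Finset.mul_sum, ← add_assoc, ← Finset.sum_add_distrib]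
  have e4 : ∀ k ∈ Finset.Icc 1 j,
      xo n k * ((xo n k - xo n (j + 1)) * P k)
        + (xo n (j + 1) - xo n (m + 1)) * (xo n k * P k)
      = xo n k * (P k * (xo n k - xo n (m + 1))) := fun k _ => by ring
  rw [Finset.sum_congr rfl e4]
  ring

theorem stmt10 (n i j : ℕ) (hj : 1 ≤ j) (hji : j ≤ i) (hin : i ≤ n) :
    subT n (ff n i j) = fcheck n i j := by
  induction i generalizing j with
  | zero => omega
  | succ i ih =>
    rcases Nat.lt_or_ge j (i + 1) with hlt | hge
    · obtain ⟨j', rfl⟩ : ∃ j', j = j' + 1 := ⟨j - 1, by omega⟩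
      have hne : ¬ (i + 1 = j' + 1) := by omega
      rw [show ff n (i+1) (j'+1) = ff n i j' + (xv n (j'+1) - xv n (i+1) - tv n) * ff n i (j'+1)
            from by rw [ff]; rw [if_neg hne]]
      have h1 : subT n (ff n i j') = fcheck n i j' := by
        rcases j' with _ | j''
        · simp [ff, fcheck_zero]
        · exact ih _ (by omega) (by omega) (by omega)
      have h2 : subT n (ff n i (j' + 1)) = fcheck n i (j' + 1) :=
        ih _ (by omega) (by omega) (by omega)
      rw [map_add, map_mul, map_sub, map_sub, subT_xv, subT_xv, subT_tv, h1, h2,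
        fcheck_rec n i j' (by omega)]
      ring
    · have hij : j = i + 1 := by omega
      subst hij
      rw [show ff n (i+1) (i+1) = pp n (i+1) from by rw [ff]; rw [if_pos rfl], subT_pp]
      unfold fcheck
      refine Finset.sum_congr rfl fun k _ => ?_
      rw [show Finset.Icc (i+1+1) (i+1) = ∅ from by simp, Finset.prod_empty, mul_one]
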